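/- arXiv:2303.00642 — 2 statements merged into one kernel-verified Lean document; each statement's English description precedes it below -/
import Mathlib

section
/- For P(x) = x(x - 1)(x + 1)(x - u) with u ∈ ℂ \ {0, ±1}, d = 6, and U(x) = x^2, the polynomial V(x) = -(U(u)/P'(u))·(P(x) - P'(u)(x - u))/(x - u)^2 + (1/6)·(U(u)/P'(u))·(P'(x) - P'(u))/(x - u) + (5/6)·(U(x) - U(u))/(x - u) (a polynomial after clearing the removable singularity at x = u) satisfies 6u(1 - u^2)·V(x) = u^2 + 5u·x + 2u^2·x^2. -/
open Polynomial

/-- For `P(x) = x(x-1)(x+1)(x-u)`, `d = 6`, `U(x) = x²`, the Gauss–Manin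
formula satisfies `6u(1-u²)·V(x) = u² + 5u·x + 2u²·x²` (identity for `x ≠ u`,
the singularity at `x = u` being removable). -/
theorem stmt5 (u : ℂ) (hu0 : u ≠ 0) (hu1 : u ≠ 1) (hum1 : u ≠ -1)
    (P : Polynomial ℂ) (hP : P = X * (X - 1) * (X + 1) * (X - C u))
    (x : ℂ) (hx : x ≠ u) :
    6 * u * (1 - u ^ 2) *
      (-(u ^ 2 / P.derivative.eval u)
          * ((P.eval x - P.derivative.eval u * (x - u)) / (x - u) ^ 2)
        + (1 / 6) * (u ^ 2 / P.derivative.eval u)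
          * ((P.derivative.eval x - P.derivative.eval u) / (x - u))
        + (5 / 6) * ((x ^ 2 - u ^ 2) / (x - u))) =
      u ^ 2 + 5 * u * x + 2 * u ^ 2 * x ^ 2 := by
  have hxu : x - u ≠ 0 := sub_ne_zero.mpr hx
  have h1 : u - 1 ≠ 0 := sub_ne_zero.mpr hu1
  have h2 : u + 1 ≠ 0 := fun h => hum1 (by linear_combination h)
  have hPu : P.derivative.eval u = u ^ 3 - u := by
    subst hP; simp; ring
  have hPx : P.derivative.eval x = 4 * x ^ 3 - 3 * u * x ^ 2 - 2 * x + u := by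
    subst hP; simp; ring
  have hPex : P.eval x = x ^ 4 - u * x ^ 3 - x ^ 2 + u * x := by
    subst hP; simp; ring
  have hA : u ^ 3 - u ≠ 0 := by
    intro h
    have : u * (u - 1) * (u + 1) = 0 := by linear_combination h
    rcases mul_eq_zero.mp this with h' | h'
    · rcases mul_eq_zero.mp h' with h'' | h''
      exacts [hu0 h'', h1 h'']
    · exact h2 h'
  rw [hPu, hPx, hPex]
  have hQ1 : (x ^ 4 - u * x ^ 3 - x ^ 2 + u * x - (u ^ 3 - u) * (x - u)) / (x - u) ^ 2
      = x ^ 2 + u * x + u ^ 2 - 1 := by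
    rw [div_eq_iff (pow_ne_zero 2 hxu)]; ring
  have hQ2 : (4 * x ^ 3 - 3 * u * x ^ 2 - 2 * x + u - (u ^ 3 - u)) / (x - u)
      = 4 * x ^ 2 + u * x + u ^ 2 - 2 := by
    rw [div_eq_iff hxu]; ring
  have hQ3 : (x ^ 2 - u ^ 2) / (x - u) = x + u := by
    rw [div_eq_iff hxu]; ring
  rw [hQ1, hQ2, hQ3]
  have hB : u ^ 2 - 1 ≠ 0 := fun h => hA (by linear_combination u * h)
  field_simp
  ring
end

section
/- Consider the connection matrix A(u) = (1/(6u(1-u^2))) · [[5u^2 - 4, u, u^2], [5u, 5u^2, 5u], [2, 2u, 2u^2]] acting on ℂ^3, and the vector e = (0, 0, 1)^T. Then for generic u ∈ ℂ \ {0, ±1} (indeed for all but finitely many u), the three vectors e, A(u)e, and (A'(u) + A(u)^2)e are linearly independent in ℂ^3, where A'(u) denotes the entrywise derivative in u. -/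
open Matrix

set_option maxHeartbeats 1000000

/-- The Gauss–Manin connection matrix for the family `y⁶ = x(x-1)(x+1)(x-u)`
in the basis `xᵏ dx/y⁵`, `k = 0,1,2`. -/
noncomputable def Aconn (u : ℂ) : Matrix (Fin 3) (Fin 3) ℂ :=
  (1 / (6 * u * (1 - u ^ 2))) •
    !![5 * u ^ 2 - 4, u, u ^ 2; 5 * u, 5 * u ^ 2, 5 * u; 2, 2 * u, 2 * u ^ 2]

private lemma hasDerivAt_den (u : ℂ) :
    HasDerivAt (fun v : ℂ => 6 * v * (1 - v ^ 2)) (6 - 18 * u ^ 2) u := by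
  have h := ((hasDerivAt_id u).const_mul (6 : ℂ)).sub ((hasDerivAt_pow 3 u).const_mul (6 : ℂ))
  have hf : (fun v : ℂ => 6 * v * (1 - v ^ 2)) = fun v : ℂ => 6 * v - 6 * v ^ 3 := by
    funext v; ring
  rw [hf]
  refine h.congr_deriv ?_
  push_cast
  ring

private lemma derivEntry (a b c u : ℂ) (h : 6 * u * (1 - u ^ 2) ≠ 0) :
    deriv (fun v : ℂ => 1 / (6 * v * (1 - v ^ 2)) * (a + b * v + c * v ^ 2)) u
      = ((b + 2 * c * u) * (6 * u * (1 - u ^ 2))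
          - (a + b * u + c * u ^ 2) * (6 - 18 * u ^ 2)) / (6 * u * (1 - u ^ 2)) ^ 2 := by
  have hnum : HasDerivAt (fun v : ℂ => a + b * v + c * v ^ 2) (b + 2 * c * u) u := by
    have h := ((hasDerivAt_const u a).add ((hasDerivAt_id u).const_mul b)).add
      ((hasDerivAt_pow 2 u).const_mul c)
    refine h.congr_deriv ?_
    push_cast
    ring
  have hd := hnum.div (hasDerivAt_den u) h
  have hf : (fun v : ℂ => 1 / (6 * v * (1 - v ^ 2)) * (a + b * v + c * v ^ 2))
      = fun v : ℂ => (a + b * v + c * v ^ 2) / (6 * v * (1 - v ^ 2)) := by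
    funext v; rw [one_div, inv_mul_eq_div]
  rw [hf]
  exact hd.deriv

/-- For all but finitely many `u ∈ ℂ \ {0, ±1}`, the vectors `e`, `A(u)e` and
`(A'(u) + A(u)²)e` are linearly independent in `ℂ³`, where `e = (0,0,1)ᵀ` and
`A'(u)` is the entrywise derivative of `A` at `u`. -/
theorem stmt6 :
    ∃ S : Finset ℂ, ∀ u : ℂ, u ∉ S → u ≠ 0 → u ≠ 1 → u ≠ -1 →
      LinearIndependent ℂ
        ![(![0, 0, 1] : Fin 3 → ℂ),
          Aconn u *ᵥ ![0, 0, 1],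
          ((Matrix.of fun i j => deriv (fun v => Aconn v i j) u) + Aconn u ^ 2) *ᵥ ![0, 0, 1]] := by
  refine ⟨∅, fun u _ h0 h1 h2 => ?_⟩
  have h1' : (1 : ℂ) - u ≠ 0 := fun h => h1 (by linear_combination -h)
  have h2' : (1 : ℂ) + u ≠ 0 := fun h => h2 (by linear_combination h)
  have hq : (1 : ℂ) - u ^ 2 ≠ 0 := by
    have : (1 : ℂ) - u ^ 2 = (1 - u) * (1 + u) := by ring
    rw [this]; exact mul_ne_zero h1' h2'
  have hd : (6 : ℂ) * u * (1 - u ^ 2) ≠ 0 :=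
    mul_ne_zero (mul_ne_zero (by norm_num) h0) hq
  set D := (6 : ℂ) * u * (1 - u ^ 2) with hD
  -- the second vector
  have hAe : Aconn u *ᵥ ![0, 0, 1] = ![u ^ 2 / D, 5 * u / D, 2 * u ^ 2 / D] := by
    funext i
    fin_cases i <;>
      · simp [Aconn, Matrix.mulVec, dotProduct, Fin.sum_univ_three, div_eq_mul_inv, hD]
        ring
  -- `A²e = A (Ae)`
  have hA2e : Aconn u *ᵥ ![u ^ 2 / D, 5 * u / D, 2 * u ^ 2 / D]
      = ![(7 * u ^ 4 + u ^ 2) / D ^ 2, 40 * u ^ 3 / D ^ 2, (12 * u ^ 2 + 4 * u ^ 4) / D ^ 2] := by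
    funext i
    fin_cases i <;>
      · simp [Aconn, Matrix.mulVec, dotProduct, Fin.sum_univ_three, div_eq_mul_inv, hD]
        field_simp
        ring
  -- derivatives of the entries of the third column
  have hd02 : deriv (fun v => Aconn v 0 2) u
      = ((0 + 2 * 1 * u) * D - (0 + 0 * u + 1 * u ^ 2) * (6 - 18 * u ^ 2)) / D ^ 2 := by
    have hf : (fun v => Aconn v 0 2)
        = fun v : ℂ => 1 / (6 * v * (1 - v ^ 2)) * (0 + 0 * v + 1 * v ^ 2) := by
      funext v; simp [Aconn]; try ring
    rw [hf, hD]; exact derivEntry 0 0 1 u hd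
  have hd12 : deriv (fun v => Aconn v 1 2) u
      = ((5 + 2 * 0 * u) * D - (0 + 5 * u + 0 * u ^ 2) * (6 - 18 * u ^ 2)) / D ^ 2 := by
    have hf : (fun v => Aconn v 1 2)
        = fun v : ℂ => 1 / (6 * v * (1 - v ^ 2)) * (0 + 5 * v + 0 * v ^ 2) := by
      funext v; simp [Aconn]; try ring
    rw [hf, hD]; exact derivEntry 0 5 0 u hd
  have hd22 : deriv (fun v => Aconn v 2 2) u
      = ((0 + 2 * 2 * u) * D - (0 + 0 * u + 2 * u ^ 2) * (6 - 18 * u ^ 2)) / D ^ 2 := by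
    have hf : (fun v => Aconn v 2 2)
        = fun v : ℂ => 1 / (6 * v * (1 - v ^ 2)) * (0 + 0 * v + 2 * v ^ 2) := by
      funext v; simp [Aconn]; try ring
    rw [hf, hD]; exact derivEntry 0 0 2 u hd
  -- the derivative matrix applied to `e`
  have hMe : (Matrix.of fun i j => deriv (fun v => Aconn v i j) u) *ᵥ ![0, 0, 1]
      = ![deriv (fun v => Aconn v 0 2) u, deriv (fun v => Aconn v 1 2) u,
          deriv (fun v => Aconn v 2 2) u] := by
    funext i
    fin_cases i <;> simp [Matrix.mulVec, dotProduct, Fin.sum_univ_three]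
  -- the third vector
  have hBe : ((Matrix.of fun i j => deriv (fun v => Aconn v i j) u) + Aconn u ^ 2) *ᵥ ![0, 0, 1]
      = ![(7 + 13 * u ^ 2) / (36 * (u ^ 2 - 1) ^ 2), 25 * u / (9 * (u ^ 2 - 1) ^ 2),
          (6 + 4 * u ^ 2) / (9 * (u ^ 2 - 1) ^ 2)] := by
    have hsq : ((u ^ 2 - 1) : ℂ) ≠ 0 := fun h => hq (by linear_combination -h)
    have hpow : Aconn u ^ 2 *ᵥ ![0, 0, 1] = Aconn u *ᵥ (Aconn u *ᵥ ![0, 0, 1]) := by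
      rw [pow_two, ← Matrix.mulVec_mulVec]
    rw [Matrix.add_mulVec, hMe, hpow, hAe, hA2e]
    funext i
    fin_cases i <;>
      · simp [hd02, hd12, hd22, hD]
        field_simp
        ring
  rw [hAe, hBe]
  have key : LinearIndependent ℂ
      (fun i => (Matrix.of ![(![0, 0, 1] : Fin 3 → ℂ),
        ![u ^ 2 / D, 5 * u / D, 2 * u ^ 2 / D],
        ![(7 + 13 * u ^ 2) / (36 * (u ^ 2 - 1) ^ 2), 25 * u / (9 * (u ^ 2 - 1) ^ 2),
          (6 + 4 * u ^ 2) / (9 * (u ^ 2 - 1) ^ 2)]]) i) := by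
    have hsq : ((u ^ 2 - 1) : ℂ) ≠ 0 := fun h => hq (by linear_combination -h)
    refine Matrix.linearIndependent_rows_iff_isUnit.mpr ?_
    rw [Matrix.isUnit_iff_isUnit_det,
      isUnit_iff_ne_zero, Matrix.det_fin_three]
    simp only [Matrix.of_apply, Matrix.cons_val', Matrix.cons_val_zero, Matrix.cons_val_one,
      Matrix.head_cons, Matrix.empty_val', Matrix.cons_val_fin_one, Matrix.head_fin_const,
      Matrix.cons_val_two, Matrix.tail_cons]
    intro h
    rw [hD] at h
    field_simp at h
    have hz : (-1890 : ℂ) * u ^ 2 * (1 - u ^ 2) ^ 4 = 0 := by linear_combination 6 * u ^ 2 * (1 - u ^ 2) ^ 3 * h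
    exact mul_ne_zero (mul_ne_zero (by norm_num) (pow_ne_zero 2 h0)) (pow_ne_zero 4 hq) hz
  exact key
end
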